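/- Let γ be a left exact preradical functor on R-Mod that preserves injectivity, and let 𝔭 be a prime ideal. Then γ(R/𝔭) is either R/𝔭 or 0, and γ(E_R(R/𝔭)) is either E_R(R/𝔭) or 0. -/

import Mathlib

universe u

/-- A preradical functor on `R`-Mod: a subfunctor of the identity functor, given by
a choice of submodule `γ(M) ⊆ M` for every `R`-module `M`, such that every linear map
`f : M → N` restricts to a map `γ(M) → γ(N)` (the action on morphisms being restriction). -/
structure Preradical (R : Type u) [CommRing R] where
  obj : (M : Type u) → [AddCommGroup M] → [Module R M] → Submodule R M
  map_le : ∀ {M N : Type u} [AddCommGroup M] [Module R M] [AddCommGroup N] [Module R N]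
    (f : M →ₗ[R] N), (obj M).map f ≤ obj N

variable {R : Type u} [CommRing R]

/-- A preradical functor is left exact iff it preserves kernels: for every linear map
`f : M → N`, `γ(ker f)` (viewed inside `M`) equals `γ(M) ∩ ker f`. -/
def Preradical.IsLeftExact (γ : Preradical R) : Prop :=
  ∀ {M N : Type u} [AddCommGroup M] [Module R M] [AddCommGroup N] [Module R N]
    (f : M →ₗ[R] N),
      (γ.obj ↥(LinearMap.ker f)).map (LinearMap.ker f).subtype
        = γ.obj M ⊓ LinearMap.ker f

/-- A preradical functor `γ` is a radical functor if `γ(M/γ(M)) = 0` for every module `M`. -/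
def Preradical.IsRadical (γ : Preradical R) : Prop :=
  ∀ (M : Type u) [AddCommGroup M] [Module R M], γ.obj (M ⧸ γ.obj M) = ⊥

/-- A preradical functor preserves injectivity if it sends injective modules to
injective modules. -/
def Preradical.PreservesInjectivity (γ : Preradical R) : Prop :=
  ∀ (M : Type u) [AddCommGroup M] [Module R M],
    Module.Injective R M → Module.Injective R ↥(γ.obj M)

/-- Let `γ` be a left exact preradical functor on `R`-Mod (`R` commutative noetherian)
preserving injectivity, and `𝔭` a prime ideal. Then `γ(R/𝔭)` is either `R/𝔭` or `0`,
and for `E` an injective hull of `R/𝔭`, `γ(E)` is either `E` or `0`. -/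
theorem stmt11 [IsNoetherianRing R] (γ : Preradical R)
    (hle : γ.IsLeftExact) (hpi : γ.PreservesInjectivity)
    (p : Ideal R) (hp : p.IsPrime)
    (E : Type u) [AddCommGroup E] [Module R E] (hE : Module.Injective R E)
    (φ : (R ⧸ p) →ₗ[R] E) (hφ : Function.Injective φ)
    (hess : ∀ N : Submodule R E, N ≠ ⊥ → N ⊓ LinearMap.range φ ≠ ⊥) :
    (γ.obj (R ⧸ p) = ⊤ ∨ γ.obj (R ⧸ p) = ⊥) ∧
    (γ.obj E = ⊤ ∨ γ.obj E = ⊥) := by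
  classical
  -- R ⧸ p is uniform: any two nonzero submodules meet
  have huniRp : ∀ A B : Submodule R (R ⧸ p), A ≠ ⊥ → B ≠ ⊥ → A ⊓ B ≠ ⊥ := by
    intro A B hA hB h
    obtain ⟨a, haA, ha0⟩ := (Submodule.ne_bot_iff A).1 hA
    obtain ⟨b, hbB, hb0⟩ := (Submodule.ne_bot_iff B).1 hB
    obtain ⟨r, rfl⟩ := Ideal.Quotient.mk_surjective b
    have hmem : r • a ∈ A ⊓ B := by
      constructor
      · exact A.smul_mem r haA
      · obtain ⟨s, rfl⟩ := Ideal.Quotient.mk_surjective a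
        have : r • (Ideal.Quotient.mk p s) = s • (Ideal.Quotient.mk p r) := by
          show Ideal.Quotient.mk p (r * s) = Ideal.Quotient.mk p (s * r)
          rw [mul_comm]
        rw [this]
        exact B.smul_mem s hbB
    have : r • a = 0 := by rw [h] at hmem; simpa using hmem
    -- r • a = (mk r) * a in R ⧸ p, a domain
    obtain ⟨s, rfl⟩ := Ideal.Quotient.mk_surjective a
    have : (Ideal.Quotient.mk p r) * (Ideal.Quotient.mk p s) = 0 := by
      rw [← this]; simp [smul_eq_mul, ← map_mul]; rfl
    have := mul_eq_zero.1 this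
    rcases this with h1 | h1
    · exact hb0 h1
    · exact ha0 h1
  -- E is uniform
  have huni : ∀ A B : Submodule R E, A ≠ ⊥ → B ≠ ⊥ → A ⊓ B ≠ ⊥ := by
    intro A B hA hB
    have hA' := hess A hA
    have hB' := hess B hB
    have hA2 : A.comap φ ≠ ⊥ := by
      intro h
      apply hA'
      rw [eq_bot_iff]
      rintro x ⟨hxA, y, rfl⟩
      have : y ∈ A.comap φ := hxA
      rw [h] at this
      simp_all
    have hB2 : B.comap φ ≠ ⊥ := by
      intro h
      apply hB'
      rw [eq_bot_iff]
      rintro x ⟨hxB, y, rfl⟩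
      have : y ∈ B.comap φ := hxB
      rw [h] at this
      simp_all
    have := huniRp _ _ hA2 hB2
    obtain ⟨z, ⟨hzA, hzB⟩, hz0⟩ := (Submodule.ne_bot_iff _).1 this
    rw [Submodule.ne_bot_iff]
    exact ⟨φ z, ⟨hzA, hzB⟩, fun h => hz0 (hφ (by simpa using h))⟩
  -- γ E is ⊤ or ⊥
  have hγE : γ.obj E = ⊤ ∨ γ.obj E = ⊥ := by
    by_cases h0 : γ.obj E = ⊥
    · exact Or.inr h0
    left
    have hinj : Module.Injective R ↥(γ.obj E) := hpi E hE
    obtain ⟨π, hπ⟩ := hinj.out (γ.obj E).subtype Subtype.val_injective LinearMap.id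
    -- π : E →ₗ γ.obj E, π ∘ subtype = id
    have hker : LinearMap.ker π ⊓ γ.obj E = ⊥ := by
      rw [eq_bot_iff]
      rintro x ⟨hx1, hx2⟩
      have := hπ ⟨x, hx2⟩
      simp only [Submodule.subtype_apply, LinearMap.id_apply] at this
      have hx0 : π x = 0 := hx1
      rw [hx0] at this
      simpa using congrArg Subtype.val this.symm
    have hkerbot : LinearMap.ker π = ⊥ := by
      by_contra hk
      exact huni _ _ hk h0 hker
    -- π injective; every x ∈ γ.obj E
    rw [eq_top_iff]
    intro x _
    have hπinj : Function.Injective π := LinearMap.ker_eq_bot.mp hkerbot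
    have : π ((π x : E)) = π x := by
      have := hπ (π x); simpa using this
    have : ((π x : E)) = x := hπinj this
    rw [← this]; exact (π x).2
  refine ⟨?_, hγE⟩
  -- transfer to R ⧸ p via left exactness
  set N := LinearMap.range φ with hN
  set f := N.mkQ with hf
  have hkerf : LinearMap.ker f = N := Submodule.ker_mkQ N
  have hlef := hle f
  -- iso ψ : R ⧸ p ≃ₗ ker f
  have hmem : ∀ x : R ⧸ p, φ x ∈ LinearMap.ker f := by
    intro x; rw [hkerf]; exact ⟨x, rfl⟩
  let ψ : (R ⧸ p) →ₗ[R] ↥(LinearMap.ker f) := φ.codRestrict _ hmem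
  have hψinj : Function.Injective ψ := by
    intro a b hab
    exact hφ (congrArg Subtype.val hab)
  have hψsurj : Function.Surjective ψ := by
    rintro ⟨x, hx⟩
    rw [hkerf] at hx
    obtain ⟨y, rfl⟩ := hx
    exact ⟨y, rfl⟩
  let ψe : (R ⧸ p) ≃ₗ[R] ↥(LinearMap.ker f) := LinearEquiv.ofBijective ψ ⟨hψinj, hψsurj⟩
  rcases hγE with hT | hB
  · left
    -- γ (ker f) = ⊤
    have h1 : (γ.obj ↥(LinearMap.ker f)).map (LinearMap.ker f).subtype = LinearMap.ker f := by
      rw [hlef, hT, top_inf_eq]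
    have h2 : γ.obj ↥(LinearMap.ker f) = ⊤ := by
      apply Submodule.map_injective_of_injective
        (show Function.Injective (LinearMap.ker f).subtype from Subtype.val_injective)
      rw [h1, Submodule.map_subtype_top]
    -- γ (R⧸p) ⊇ image of ⊤ under ψe.symm
    have h3 := γ.map_le (ψe.symm : ↥(LinearMap.ker f) →ₗ[R] (R ⧸ p))
    rw [h2] at h3
    rw [eq_top_iff]
    intro x _
    apply h3
    exact ⟨ψe x, trivial, by simp⟩
  · right
    have h1 : (γ.obj ↥(LinearMap.ker f)).map (LinearMap.ker f).subtype = ⊥ := by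
      rw [hlef, hB, bot_inf_eq]
    have h2 : γ.obj ↥(LinearMap.ker f) = ⊥ := by
      apply Submodule.map_injective_of_injective
        (show Function.Injective (LinearMap.ker f).subtype from Subtype.val_injective)
      rw [h1, Submodule.map_bot]
    have h3 := γ.map_le ψ
    rw [h2, le_bot_iff] at h3
    apply Submodule.map_injective_of_injective hψinj
    rw [h3, Submodule.map_bot]
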